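/- For any probability measure D on X×Y and any probability measure Q on H with r_D(Q) < 1/2, if r_D(Q) ≤ d_D(Q) then C_D(Q) ≤ 4·e_D(Q) ≤ 2·r_D(Q), where C_D(Q) = 1 − (1 − 2·r_D(Q))² / (1 − 2·d_D(Q)). -/

import Mathlib

open MeasureTheory

variable {X H : Type*} [MeasurableSpace X] [MeasurableSpace H]

/-- Gibbs risk: `r_D(Q) = E_{h~Q} P_{(x,y)~D}[h(x) ≠ y]`. -/
noncomputable def gibbsRisk (D : Measure (X × ℝ)) (Q : Measure H) (f : H → X → ℝ) : ℝ :=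
  ∫ h, (D {p | f h p.1 ≠ p.2}).toReal ∂Q

/-- Expected disagreement: `d_D(Q) = E_{h1~Q} E_{h2~Q} P_{x~D_X}[h1(x) ≠ h2(x)]`. -/
noncomputable def disagreement (D : Measure (X × ℝ)) (Q : Measure H) (f : H → X → ℝ) : ℝ :=
  ∫ h₁, ∫ h₂, ((D.map Prod.fst) {x | f h₁ x ≠ f h₂ x}).toReal ∂Q ∂Q

/-- Expected joint error: `e_D(Q) = E_{h1~Q} E_{h2~Q} P_{(x,y)~D}[h1(x) ≠ y ∧ h2(x) ≠ y]`. -/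
noncomputable def jointError (D : Measure (X × ℝ)) (Q : Measure H) (f : H → X → ℝ) : ℝ :=
  ∫ h₁, ∫ h₂, (D {p | f h₁ p.1 ≠ p.2 ∧ f h₂ p.1 ≠ p.2}).toReal ∂Q ∂Q

section Aux

lemma pm_ind (a b : ℝ) (ha : a = 1 ∨ a = -1) (hb : b = 1 ∨ b = -1) :
    (if a ≠ b then (1:ℝ) else 0) = (1 - a * b) / 2 := by
  rcases ha with rfl | rfl <;> rcases hb with rfl | rfl <;> norm_num

lemma pm_ind2 (a b c : ℝ) (ha : a = 1 ∨ a = -1) (hb : b = 1 ∨ b = -1)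
    (hc : c = 1 ∨ c = -1) :
    (if a ≠ c ∧ b ≠ c then (1:ℝ) else 0) = (1 - a * c) * (1 - b * c) / 4 := by
  rcases ha with rfl | rfl <;> rcases hb with rfl | rfl <;> rcases hc with rfl | rfl <;> norm_num

lemma pm_bd {a b : ℝ} (ha : |a| ≤ 1) (hb : |b| ≤ 1) : |1 - a * b| ≤ 2 := by
  have h1 : |a * b| ≤ 1 := by rw [abs_mul]; nlinarith [abs_nonneg a, abs_nonneg b]
  calc |1 - a * b| ≤ |(1:ℝ)| + |a * b| := abs_sub _ _
    _ ≤ 2 := by rw [abs_one]; linarith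

lemma integrable_of_ae_bdd {α : Type*} [MeasurableSpace α] {μ : Measure α} [IsFiniteMeasure μ]
    {g : α → ℝ} (hg : AEStronglyMeasurable g μ) {C : ℝ} (h : ∀ᵐ a ∂μ, |g a| ≤ C) :
    Integrable g μ :=
  ⟨hg, HasFiniteIntegral.of_bounded (by simpa [Real.norm_eq_abs] using h)⟩

lemma abs_integral_le_one {α : Type*} [MeasurableSpace α] {μ : Measure α} [IsProbabilityMeasure μ]
    {g : α → ℝ} (h : ∀ᵐ a ∂μ, |g a| ≤ 1) : |∫ a, g a ∂μ| ≤ 1 := by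
  have := norm_integral_le_of_norm_le_const (μ := μ) (f := g) (C := 1)
    (by simpa [Real.norm_eq_abs] using h)
  simpa [Real.norm_eq_abs] using this

end Aux

/-- If `r_D(Q) < 1/2` and `r_D(Q) ≤ d_D(Q)` then `C_D(Q) ≤ 4·e_D(Q) ≤ 2·r_D(Q)`,
where `C_D(Q) = 1 − (1 − 2·r_D(Q))²/(1 − 2·d_D(Q))`. -/
theorem cbound_le_four_jointError_le_two_gibbs
    (D : Measure (X × ℝ)) [IsProbabilityMeasure D]
    (Q : Measure H) [IsProbabilityMeasure Q]
    (f : H → X → ℝ)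
    (hf : Measurable fun p : H × X => f p.1 p.2)
    (hvals : ∀ h x, f h x = 1 ∨ f h x = -1)
    (hlabels : ∀ᵐ p ∂D, p.2 = 1 ∨ p.2 = -1)
    (hr : gibbsRisk D Q f < 1 / 2)
    (hrd : gibbsRisk D Q f ≤ disagreement D Q f) :
    1 - (1 - 2 * gibbsRisk D Q f) ^ 2 / (1 - 2 * disagreement D Q f) ≤
        4 * jointError D Q f ∧
    4 * jointError D Q f ≤ 2 * gibbsRisk D Q f := by
  classical
  -- measurability of individual voters
  have hfm : ∀ h, Measurable (f h) := fun h => hf.comp measurable_prodMk_left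
  have hfabs : ∀ h x, |f h x| = 1 := fun h x => by
    rcases hvals h x with h1 | h1 <;> simp [h1]
  have hfabs' : ∀ h x, |f h x| ≤ 1 := fun h x => le_of_eq (hfabs h x)
  -- the majority-vote margin function
  set m : X → ℝ := fun x => ∫ h, f h x ∂Q with hm_def
  have hm_sm : StronglyMeasurable m := by
    have hsw : Measurable fun q : X × H => f q.2 q.1 := hf.comp measurable_swap
    exact hsw.stronglyMeasurable.integral_prod_right'
  have hm_meas : Measurable m := hm_sm.measurable
  have hm_bd : ∀ x, |m x| ≤ 1 := fun x =>
    abs_integral_le_one (ae_of_all _ fun h => hfabs' h x)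
  -- label facts
  have hyabs : ∀ᵐ p : X × ℝ ∂D, |p.2| = 1 := by
    filter_upwards [hlabels] with p hp
    rcases hp with h | h <;> simp [h]
  have hy2 : ∀ᵐ p : X × ℝ ∂D, p.2 * p.2 = 1 := by
    filter_upwards [hlabels] with p hp
    rcases hp with h | h <;> simp [h]
  have hprod_lab : ∀ᵐ z : H × (X × ℝ) ∂(Q.prod D), z.2.2 = 1 ∨ z.2.2 = -1 := by
    have hmap : (Q.prod D).map Prod.snd = D := by
      rw [Measure.map_snd_prod]; simp
    have h2 := hlabels
    rw [← hmap] at h2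
    exact ae_of_ae_map measurable_snd.aemeasurable h2
  have hprod_abs : ∀ᵐ z : H × (X × ℝ) ∂(Q.prod D), |z.2.2| = 1 := by
    filter_upwards [hprod_lab] with z hz
    rcases hz with h | h <;> simp [h]
  -- basic integrable functions
  have hmD : Measurable fun p : X × ℝ => m p.1 := hm_meas.comp measurable_fst
  have hg_meas : Measurable fun p : X × ℝ => m p.1 * p.2 := hmD.mul measurable_snd
  have hg_bd : ∀ᵐ p ∂D, |m p.1 * p.2| ≤ 1 := by
    filter_upwards [hyabs] with p hp
    rw [abs_mul, hp, mul_one]; exact hm_bd p.1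
  have hg_int : Integrable (fun p : X × ℝ => m p.1 * p.2) D :=
    integrable_of_ae_bdd hg_meas.aestronglyMeasurable hg_bd
  have hmm_int : Integrable (fun p : X × ℝ => m p.1 * m p.1) D := by
    refine integrable_of_ae_bdd (hmD.mul hmD).aestronglyMeasurable (C := 1) (ae_of_all _ fun p => ?_)
    rw [abs_mul]
    nlinarith [hm_bd p.1, abs_nonneg (m p.1)]
  set R : ℝ := ∫ p : X × ℝ, m p.1 * p.2 ∂D with hR_def
  set S : ℝ := ∫ p : X × ℝ, m p.1 * m p.1 ∂D with hS_def
  have hfy_int : ∀ h : H, Integrable (fun p : X × ℝ => f h p.1 * p.2) D := by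
    intro h
    refine integrable_of_ae_bdd
      (((hfm h).comp measurable_fst).mul measurable_snd).aestronglyMeasurable (C := 1) ?_
    filter_upwards [hyabs] with p hp
    rw [abs_mul, hp, mul_one, hfabs]
  have hfx_meas : ∀ x : X, Measurable fun h : H => f h x := fun x =>
    hf.comp (measurable_id.prodMk measurable_const)
  have hfx_int : ∀ x : X, Integrable (fun h : H => f h x) Q := fun x =>
    integrable_of_ae_bdd (hfx_meas x).aestronglyMeasurable (ae_of_all _ fun h => hfabs' h x)
  ------------------------------------------------------------------
  -- Step r : gibbsRisk = (1 - R)/2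
  ------------------------------------------------------------------
  have hF1_meas : Measurable fun z : H × (X × ℝ) => f z.1 z.2.1 * z.2.2 :=
    (hf.comp (measurable_fst.prodMk (measurable_fst.comp measurable_snd))).mul
      (measurable_snd.comp measurable_snd)
  have hF1_int : Integrable (fun z : H × (X × ℝ) => f z.1 z.2.1 * z.2.2) (Q.prod D) := by
    refine integrable_of_ae_bdd hF1_meas.aestronglyMeasurable (C := 1) ?_
    filter_upwards [hprod_abs] with z hz
    rw [abs_mul, hz, mul_one, hfabs]
  have hr_ind : ∀ h, (D {p : X × ℝ | f h p.1 ≠ p.2}).toReal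
      = ∫ p, (1 - f h p.1 * p.2) / 2 ∂D := by
    intro h
    have hSm : MeasurableSet {p : X × ℝ | f h p.1 ≠ p.2} :=
      (measurableSet_eq_fun ((hfm h).comp measurable_fst) measurable_snd).compl
    rw [← measureReal_def, ← integral_indicator_one hSm]
    refine integral_congr_ae ?_
    filter_upwards [hlabels] with p hp
    have := pm_ind (f h p.1) p.2 (hvals h p.1) hp
    simpa [Set.indicator_apply] using this
  have hT_eq : ∀ h, ∫ p, (1 - f h p.1 * p.2) / 2 ∂D
      = (1 - ∫ p, f h p.1 * p.2 ∂D) / 2 := by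
    intro h
    rw [integral_div, integral_sub (integrable_const 1) (hfy_int h), integral_const]
    simp
  have hT_sm : StronglyMeasurable fun h : H => ∫ p, f h p.1 * p.2 ∂D :=
    hF1_meas.stronglyMeasurable.integral_prod_right'
  have hT_bd : ∀ h, |∫ p, f h p.1 * p.2 ∂D| ≤ 1 := by
    intro h
    refine abs_integral_le_one ?_
    filter_upwards [hyabs] with p hp
    rw [abs_mul, hp, mul_one, hfabs]
  have hT_int : Integrable (fun h : H => ∫ p, f h p.1 * p.2 ∂D) Q :=
    integrable_of_ae_bdd hT_sm.aestronglyMeasurable (ae_of_all _ hT_bd)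
  have hr_eq : gibbsRisk D Q f = (1 - R) / 2 := by
    have h1 : gibbsRisk D Q f = ∫ h, (1 - ∫ p, f h p.1 * p.2 ∂D) / 2 ∂Q := by
      unfold gibbsRisk
      refine integral_congr_ae (ae_of_all _ fun h => ?_)
      beta_reduce
      rw [hr_ind h, hT_eq h]
    rw [h1, integral_div, integral_sub (integrable_const 1) hT_int, integral_const]
    have hswap : ∫ h, ∫ p, f h p.1 * p.2 ∂D ∂Q = ∫ p : X × ℝ, ∫ h, f h p.1 * p.2 ∂Q ∂D :=
      integral_integral_swap (f := fun h (p : X × ℝ) => f h p.1 * p.2) hF1_int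
    rw [hswap]
    have hpt : ∀ p : X × ℝ, ∫ h, f h p.1 * p.2 ∂Q = m p.1 * p.2 := fun p =>
      integral_mul_const p.2 fun h => f h p.1
    rw [integral_congr_ae (ae_of_all _ hpt)]
    simp [hR_def]
  ------------------------------------------------------------------
  -- Step d : disagreement = (1 - S)/2
  ------------------------------------------------------------------
  have hff_int : ∀ h₁ h₂, Integrable (fun p : X × ℝ => f h₁ p.1 * f h₂ p.1) D := by
    intro h₁ h₂
    refine integrable_of_ae_bdd
      (((hfm h₁).comp measurable_fst).mul ((hfm h₂).comp measurable_fst)).aestronglyMeasurable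
      (C := 1) (ae_of_all _ fun p => ?_)
    rw [abs_mul, hfabs, hfabs]; norm_num
  have hd_ind : ∀ h₁ h₂, ((D.map Prod.fst) {x | f h₁ x ≠ f h₂ x}).toReal
      = ∫ p, (1 - f h₁ p.1 * f h₂ p.1) / 2 ∂D := by
    intro h₁ h₂
    have hS0 : MeasurableSet {x | f h₁ x ≠ f h₂ x} :=
      (measurableSet_eq_fun (hfm h₁) (hfm h₂)).compl
    rw [Measure.map_apply measurable_fst hS0, ← measureReal_def,
      ← integral_indicator_one (hS0.preimage measurable_fst)]
    refine integral_congr_ae (ae_of_all _ fun p => ?_)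
    have := pm_ind (f h₁ p.1) (f h₂ p.1) (hvals h₁ p.1) (hvals h₂ p.1)
    simpa [Set.indicator_apply, Set.mem_preimage] using this
  have hin_meas : ∀ h₁ : H, Measurable fun z : H × (X × ℝ) => f h₁ z.2.1 * f z.1 z.2.1 := fun h₁ =>
    ((hfm h₁).comp (measurable_fst.comp measurable_snd)).mul
      (hf.comp (measurable_fst.prodMk (measurable_fst.comp measurable_snd)))
  have hin_int : ∀ h₁ : H,
      Integrable (fun z : H × (X × ℝ) => f h₁ z.2.1 * f z.1 z.2.1) (Q.prod D) := fun h₁ =>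
    integrable_of_ae_bdd (hin_meas h₁).aestronglyMeasurable (C := 1)
      (ae_of_all _ fun z => by rw [abs_mul, hfabs, hfabs]; norm_num)
  have hd_inner : ∀ h₁, ∫ h₂, ∫ p : X × ℝ, f h₁ p.1 * f h₂ p.1 ∂D ∂Q
      = ∫ p : X × ℝ, f h₁ p.1 * m p.1 ∂D := by
    intro h₁
    have hswap : ∫ h₂, ∫ p : X × ℝ, f h₁ p.1 * f h₂ p.1 ∂D ∂Q
        = ∫ p : X × ℝ, ∫ h₂, f h₁ p.1 * f h₂ p.1 ∂Q ∂D :=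
      integral_integral_swap (f := fun h₂ (p : X × ℝ) => f h₁ p.1 * f h₂ p.1) (hin_int h₁)
    rw [hswap]
    refine integral_congr_ae (ae_of_all _ fun p => ?_)
    exact integral_const_mul (f h₁ p.1) fun h => f h p.1
  have hfm_int : Integrable (fun z : H × (X × ℝ) => f z.1 z.2.1 * m z.2.1) (Q.prod D) := by
    refine integrable_of_ae_bdd
      ((hf.comp (measurable_fst.prodMk (measurable_fst.comp measurable_snd))).mul
        (hm_meas.comp (measurable_fst.comp measurable_snd))).aestronglyMeasurable
      (C := 1) (ae_of_all _ fun z => ?_)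
    rw [abs_mul, hfabs, one_mul]; exact hm_bd z.2.1
  have hU_sm : StronglyMeasurable fun h₁ : H => ∫ p : X × ℝ, f h₁ p.1 * m p.1 ∂D :=
    ((hf.comp (measurable_fst.prodMk (measurable_fst.comp measurable_snd))).mul
      (hm_meas.comp (measurable_fst.comp measurable_snd))).stronglyMeasurable.integral_prod_right'
  have hU_bd : ∀ h₁, |∫ p : X × ℝ, f h₁ p.1 * m p.1 ∂D| ≤ 1 := fun h₁ =>
    abs_integral_le_one (ae_of_all _ fun p => by
      rw [abs_mul, hfabs, one_mul]; exact hm_bd p.1)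
  have hU_int : Integrable (fun h₁ : H => ∫ p : X × ℝ, f h₁ p.1 * m p.1 ∂D) Q :=
    integrable_of_ae_bdd hU_sm.aestronglyMeasurable (ae_of_all _ hU_bd)
  have hfm2_int : ∀ h₁, Integrable (fun p : X × ℝ => f h₁ p.1 * m p.1) D := fun h₁ =>
    integrable_of_ae_bdd (((hfm h₁).comp measurable_fst).mul hmD).aestronglyMeasurable
      (C := 1) (ae_of_all _ fun p => by rw [abs_mul, hfabs, one_mul]; exact hm_bd p.1)
  have hUin_sm : StronglyMeasurable fun h₂ : H => ∫ p : X × ℝ, f h₂ p.1 * p.2 ∂D := hT_sm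
  have hd_eq : disagreement D Q f = (1 - S) / 2 := by
    have hUU_int : ∀ h₁, Integrable (fun h₂ : H => ∫ p : X × ℝ, f h₁ p.1 * f h₂ p.1 ∂D) Q := by
      intro h₁
      refine integrable_of_ae_bdd
        ((hin_meas h₁).stronglyMeasurable.integral_prod_right').aestronglyMeasurable
        (C := 1) (ae_of_all _ fun h₂ => ?_)
      exact abs_integral_le_one (ae_of_all _ fun p => by
        rw [abs_mul, hfabs, hfabs]; norm_num)
    have h1 : disagreement D Q f = ∫ h₁, (1 - ∫ p : X × ℝ, f h₁ p.1 * m p.1 ∂D) / 2 ∂Q := by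
      unfold disagreement
      refine integral_congr_ae (ae_of_all _ fun h₁ => ?_)
      beta_reduce
      have h2 : ∀ h₂, ((D.map Prod.fst) {x | f h₁ x ≠ f h₂ x}).toReal
          = (1 - ∫ p : X × ℝ, f h₁ p.1 * f h₂ p.1 ∂D) / 2 := by
        intro h₂
        rw [hd_ind h₁ h₂, integral_div,
          integral_sub (integrable_const 1) (hff_int h₁ h₂), integral_const]
        simp
      calc ∫ h₂, ((D.map Prod.fst) {x | f h₁ x ≠ f h₂ x}).toReal ∂Q
          = ∫ h₂, (1 - ∫ p : X × ℝ, f h₁ p.1 * f h₂ p.1 ∂D) / 2 ∂Q :=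
            integral_congr_ae (ae_of_all _ h2)
        _ = (1 - ∫ h₂, ∫ p : X × ℝ, f h₁ p.1 * f h₂ p.1 ∂D ∂Q) / 2 := by
            rw [integral_div, integral_sub (integrable_const 1) (hUU_int h₁), integral_const]
            simp
        _ = (1 - ∫ p : X × ℝ, f h₁ p.1 * m p.1 ∂D) / 2 := by rw [hd_inner h₁]
    rw [h1, integral_div, integral_sub (integrable_const 1) hU_int, integral_const]
    have hswap : ∫ h₁, ∫ p : X × ℝ, f h₁ p.1 * m p.1 ∂D ∂Q
        = ∫ p : X × ℝ, ∫ h₁, f h₁ p.1 * m p.1 ∂Q ∂D :=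
      integral_integral_swap (f := fun h₁ (p : X × ℝ) => f h₁ p.1 * m p.1) hfm_int
    rw [hswap]
    have hpt : ∀ p : X × ℝ, ∫ h, f h p.1 * m p.1 ∂Q = m p.1 * m p.1 := fun p =>
      integral_mul_const (m p.1) fun h => f h p.1
    rw [integral_congr_ae (ae_of_all _ hpt)]
    simp [hS_def]
  ------------------------------------------------------------------
  -- Step e : jointError = (1 - 2R + S)/4
  ------------------------------------------------------------------
  have he_ind : ∀ h₁ h₂, (D {p : X × ℝ | f h₁ p.1 ≠ p.2 ∧ f h₂ p.1 ≠ p.2}).toReal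
      = ∫ p, (1 - f h₁ p.1 * p.2) * (1 - f h₂ p.1 * p.2) / 4 ∂D := by
    intro h₁ h₂
    have hS1 : MeasurableSet {p : X × ℝ | f h₁ p.1 ≠ p.2} :=
      (measurableSet_eq_fun ((hfm h₁).comp measurable_fst) measurable_snd).compl
    have hS2 : MeasurableSet {p : X × ℝ | f h₂ p.1 ≠ p.2} :=
      (measurableSet_eq_fun ((hfm h₂).comp measurable_fst) measurable_snd).compl
    have hSm : MeasurableSet {p : X × ℝ | f h₁ p.1 ≠ p.2 ∧ f h₂ p.1 ≠ p.2} := hS1.inter hS2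
    rw [← measureReal_def, ← integral_indicator_one hSm]
    refine integral_congr_ae ?_
    filter_upwards [hlabels] with p hp
    have := pm_ind2 (f h₁ p.1) (f h₂ p.1) p.2 (hvals h₁ p.1) (hvals h₂ p.1) hp
    simpa [Set.indicator_apply] using this
  -- pointwise inner Q-integral
  have hfy_intQ : ∀ p : X × ℝ, Integrable (fun h : H => f h p.1 * p.2) Q := fun p =>
    (hfx_int p.1).mul_const p.2
  have hinner_pt : ∀ p : X × ℝ, ∀ h₁ : H,
      ∫ h₂, (1 - f h₁ p.1 * p.2) * (1 - f h₂ p.1 * p.2) / 4 ∂Q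
        = (1 - f h₁ p.1 * p.2) * (1 - m p.1 * p.2) / 4 := by
    intro p h₁
    have h3 : ∫ h₂, (1 - f h₂ p.1 * p.2) ∂Q = 1 - m p.1 * p.2 := by
      rw [integral_sub (integrable_const 1) (hfy_intQ p), integral_const,
        integral_mul_const p.2 fun h => f h p.1]
      simp [hm_def]
    calc ∫ h₂, (1 - f h₁ p.1 * p.2) * (1 - f h₂ p.1 * p.2) / 4 ∂Q
        = (∫ h₂, (1 - f h₁ p.1 * p.2) * (1 - f h₂ p.1 * p.2) ∂Q) / 4 :=
          integral_div 4 _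
      _ = ((1 - f h₁ p.1 * p.2) * ∫ h₂, (1 - f h₂ p.1 * p.2) ∂Q) / 4 := by
          rw [integral_const_mul (1 - f h₁ p.1 * p.2) fun h₂ => (1 - f h₂ p.1 * p.2)]
      _ = (1 - f h₁ p.1 * p.2) * (1 - m p.1 * p.2) / 4 := by rw [h3]
  -- swap for the inner double integral (h₂ vs p), h₁ fixed
  have heswap1 : ∀ h₁ : H,
      ∫ h₂, ∫ p : X × ℝ, (1 - f h₁ p.1 * p.2) * (1 - f h₂ p.1 * p.2) / 4 ∂D ∂Q
        = ∫ p : X × ℝ, (1 - f h₁ p.1 * p.2) * (1 - m p.1 * p.2) / 4 ∂D := by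
    intro h₁
    have hmeas : Measurable fun z : H × (X × ℝ) =>
        (1 - f h₁ z.2.1 * z.2.2) * (1 - f z.1 z.2.1 * z.2.2) / 4 := by
      have m1 : Measurable fun z : H × (X × ℝ) => 1 - f h₁ z.2.1 * z.2.2 :=
        measurable_const.sub (((hfm h₁).comp (measurable_fst.comp measurable_snd)).mul
          (measurable_snd.comp measurable_snd))
      have m2 : Measurable fun z : H × (X × ℝ) => 1 - f z.1 z.2.1 * z.2.2 :=
        measurable_const.sub hF1_meas
      exact (m1.mul m2).div_const 4
    have hint : Integrable (fun z : H × (X × ℝ) =>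
        (1 - f h₁ z.2.1 * z.2.2) * (1 - f z.1 z.2.1 * z.2.2) / 4) (Q.prod D) := by
      refine integrable_of_ae_bdd hmeas.aestronglyMeasurable (C := 1) ?_
      filter_upwards [hprod_abs] with z hz
      have b1 : |1 - f h₁ z.2.1 * z.2.2| ≤ 2 :=
        pm_bd (hfabs' h₁ z.2.1) (le_of_eq hz)
      have b2 : |1 - f z.1 z.2.1 * z.2.2| ≤ 2 :=
        pm_bd (hfabs' z.1 z.2.1) (le_of_eq hz)
      rw [abs_div, abs_mul]
      have : |(4:ℝ)| = 4 := by norm_num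
      rw [this]
      nlinarith [abs_nonneg (1 - f h₁ z.2.1 * z.2.2), abs_nonneg (1 - f z.1 z.2.1 * z.2.2)]
    have hswap := integral_integral_swap
      (f := fun h₂ (p : X × ℝ) => (1 - f h₁ p.1 * p.2) * (1 - f h₂ p.1 * p.2) / 4) hint
    rw [hswap]
    exact integral_congr_ae (ae_of_all _ fun p => hinner_pt p h₁)
  -- swap for the outer double integral (h₁ vs p)
  have heswap2 :
      ∫ h₁, ∫ p : X × ℝ, (1 - f h₁ p.1 * p.2) * (1 - m p.1 * p.2) / 4 ∂D ∂Q
        = ∫ p : X × ℝ, (1 - m p.1 * p.2) * (1 - m p.1 * p.2) / 4 ∂D := by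
    have hmeas : Measurable fun z : H × (X × ℝ) =>
        (1 - f z.1 z.2.1 * z.2.2) * (1 - m z.2.1 * z.2.2) / 4 := by
      have m1 : Measurable fun z : H × (X × ℝ) => 1 - f z.1 z.2.1 * z.2.2 :=
        measurable_const.sub hF1_meas
      have m2 : Measurable fun z : H × (X × ℝ) => 1 - m z.2.1 * z.2.2 :=
        measurable_const.sub ((hm_meas.comp (measurable_fst.comp measurable_snd)).mul
          (measurable_snd.comp measurable_snd))
      exact (m1.mul m2).div_const 4
    have hint : Integrable (fun z : H × (X × ℝ) =>
        (1 - f z.1 z.2.1 * z.2.2) * (1 - m z.2.1 * z.2.2) / 4) (Q.prod D) := by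
      refine integrable_of_ae_bdd hmeas.aestronglyMeasurable (C := 1) ?_
      filter_upwards [hprod_abs] with z hz
      have b1 : |1 - f z.1 z.2.1 * z.2.2| ≤ 2 :=
        pm_bd (hfabs' z.1 z.2.1) (le_of_eq hz)
      have b2 : |1 - m z.2.1 * z.2.2| ≤ 2 := pm_bd (hm_bd z.2.1) (le_of_eq hz)
      rw [abs_div, abs_mul]
      have : |(4:ℝ)| = 4 := by norm_num
      rw [this]
      nlinarith [abs_nonneg (1 - f z.1 z.2.1 * z.2.2), abs_nonneg (1 - m z.2.1 * z.2.2)]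
    have hswap := integral_integral_swap
      (f := fun h₁ (p : X × ℝ) => (1 - f h₁ p.1 * p.2) * (1 - m p.1 * p.2) / 4) hint
    rw [hswap]
    refine integral_congr_ae (ae_of_all _ fun p => ?_)
    have h3 : ∫ h₁, (1 - f h₁ p.1 * p.2) ∂Q = 1 - m p.1 * p.2 := by
      rw [integral_sub (integrable_const 1) (hfy_intQ p), integral_const,
        integral_mul_const p.2 fun h => f h p.1]
      simp [hm_def]
    calc ∫ h₁, (1 - f h₁ p.1 * p.2) * (1 - m p.1 * p.2) / 4 ∂Q
        = (∫ h₁, (1 - f h₁ p.1 * p.2) * (1 - m p.1 * p.2) ∂Q) / 4 := integral_div 4 _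
      _ = ((∫ h₁, (1 - f h₁ p.1 * p.2) ∂Q) * (1 - m p.1 * p.2)) / 4 := by
          rw [integral_mul_const (1 - m p.1 * p.2) fun h₁ => (1 - f h₁ p.1 * p.2)]
      _ = (1 - m p.1 * p.2) * (1 - m p.1 * p.2) / 4 := by rw [h3]
  have he_eq : jointError D Q f = (1 - 2 * R + S) / 4 := by
    have h1 : jointError D Q f
        = ∫ p : X × ℝ, (1 - m p.1 * p.2) * (1 - m p.1 * p.2) / 4 ∂D := by
      unfold jointError
      rw [← heswap2]
      refine integral_congr_ae (ae_of_all _ fun h₁ => ?_)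
      beta_reduce
      rw [← heswap1 h₁]
      refine integral_congr_ae (ae_of_all _ fun h₂ => ?_)
      beta_reduce
      rw [he_ind h₁ h₂]
    rw [h1]
    have h2 : ∀ᵐ p : X × ℝ ∂D, (1 - m p.1 * p.2) * (1 - m p.1 * p.2) / 4
        = (1 - 2 * (m p.1 * p.2) + m p.1 * m p.1) / 4 := by
      filter_upwards [hy2] with p hp
      have : (m p.1 * p.2) * (m p.1 * p.2) = m p.1 * m p.1 := by
        rw [mul_mul_mul_comm, hp, mul_one]
      linear_combination this / 4
    have hc1 : Integrable (fun p : X × ℝ => 1 - 2 * (m p.1 * p.2)) D :=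
      (integrable_const 1).sub (hg_int.const_mul 2)
    rw [integral_congr_ae h2, integral_div,
      integral_add hc1 hmm_int,
      integral_sub (integrable_const 1) (hg_int.const_mul 2),
      integral_const_mul 2 (fun p : X × ℝ => m p.1 * p.2), integral_const]
    simp [hR_def, hS_def]
  ------------------------------------------------------------------
  -- Cauchy–Schwarz : R * R ≤ S
  ------------------------------------------------------------------
  have hg2_eq : ∫ p : X × ℝ, (m p.1 * p.2) * (m p.1 * p.2) ∂D = S := by
    refine integral_congr_ae ?_
    filter_upwards [hy2] with p hp
    rw [mul_mul_mul_comm, hp, mul_one]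
  have hg2_int : Integrable (fun p : X × ℝ => (m p.1 * p.2) * (m p.1 * p.2)) D := by
    refine integrable_of_ae_bdd (hg_meas.mul hg_meas).aestronglyMeasurable (C := 1) ?_
    filter_upwards [hg_bd] with p hp
    rw [abs_mul]
    nlinarith [abs_nonneg (m p.1 * p.2)]
  have hCS : R * R ≤ S := by
    have h0 : 0 ≤ ∫ p : X × ℝ, (m p.1 * p.2 - R) * (m p.1 * p.2 - R) ∂D :=
      integral_nonneg fun p => mul_self_nonneg _
    have hfun : (fun p : X × ℝ => (m p.1 * p.2 - R) * (m p.1 * p.2 - R))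
        = fun p : X × ℝ => (m p.1 * p.2) * (m p.1 * p.2) - 2 * R * (m p.1 * p.2) + R * R := by
      funext p; ring
    have hc2 : Integrable
        (fun p : X × ℝ => (m p.1 * p.2) * (m p.1 * p.2) - 2 * R * (m p.1 * p.2)) D :=
      hg2_int.sub (hg_int.const_mul (2 * R))
    rw [hfun, integral_add hc2 (integrable_const (R * R)),
      integral_sub hg2_int (hg_int.const_mul (2 * R)),
      integral_const_mul (2 * R) (fun p : X × ℝ => m p.1 * p.2), integral_const, hg2_eq] at h0
    simp only [measure_univ, ENNReal.toReal_one, one_smul, smul_eq_mul, probReal_univ, ← hR_def] at h0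
    nlinarith [h0]
  ------------------------------------------------------------------
  -- Final algebra
  ------------------------------------------------------------------
  rw [hr_eq] at hr
  rw [hr_eq, hd_eq] at hrd
  have hR0 : 0 < R := by linarith
  have hSR : S ≤ R := by linarith
  have hS0 : 0 < S := lt_of_lt_of_le (mul_pos hR0 hR0) hCS
  rw [hr_eq, hd_eq, he_eq]
  constructor
  · have e1 : (1 - 2 * ((1 - R) / 2)) = R := by ring
    have e2 : (1 - 2 * ((1 - S) / 2)) = S := by ring
    rw [e1, e2]
    have key : 2 * R - S ≤ R ^ 2 / S := by
      rw [le_div_iff₀ hS0]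
      nlinarith [sq_nonneg (R - S)]
    have h4 : 4 * ((1 - 2 * R + S) / 4) = 1 - 2 * R + S := by ring
    rw [h4]
    linarith
  · nlinarith [hSR]
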